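/- If the p-values satisfy positive regression dependence on the subset of nulls (PRDS), then the BH procedure at level α has FDR at most α·K₀/K. -/

import Mathlib

open MeasureTheory ProbabilityTheory Finset
open scoped ENNReal Classical

noncomputable section

/-- The `i`-th smallest value (0-indexed) among `p 0, …, p (K-1)`. -/
def sortAsc {K : ℕ} (p : Fin K → ℝ) : Fin K → ℝ := p ∘ Tuple.sort p

/-- The `i`-th largest value (0-indexed) among `e 0, …, e (K-1)`. -/
def sortDesc {K : ℕ} (e : Fin K → ℝ) : Fin K → ℝ := e ∘ Tuple.sort (fun j => -e j)

/-- `k* = max {k : K p_(k) / k ≤ α}` (with `max ∅ = 0`), the BH rejection count. -/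
def bhCount (K : ℕ) (α : ℝ) (p : Fin K → ℝ) : ℕ :=
  (univ.filter (fun i : Fin K => (K : ℝ) * sortAsc p i / (i.1 + 1) ≤ α)).sup
    (fun i => i.1 + 1)

/-- The BH procedure rejects the hypotheses carrying the `k*` smallest p-values. -/
def bhRejects (K : ℕ) (α : ℝ) (p : Fin K → ℝ) : Finset (Fin K) :=
  univ.filter (fun k => ∃ i : Fin K, i.1 + 1 ≤ bhCount K α p ∧ p k ≤ sortAsc p i)

/-- `k* = max {k : k e_[k] / K ≥ 1/α}`, the e-BH rejection count. -/
def ebhCount (K : ℕ) (α : ℝ) (e : Fin K → ℝ) : ℕ :=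
  (univ.filter (fun i : Fin K => 1 / α ≤ (i.1 + 1) * sortDesc e i / K)).sup
    (fun i => i.1 + 1)

/-- The e-BH procedure rejects the hypotheses carrying the `k*` largest e-values. -/
def ebhRejects (K : ℕ) (α : ℝ) (e : Fin K → ℝ) : Finset (Fin K) :=
  univ.filter (fun k => ∃ i : Fin K, i.1 + 1 ≤ ebhCount K α e ∧ sortDesc e i ≤ e k)

/-- Simes function `S_K(p) = min_k (K/k) p_(k)`. -/
def simes (K : ℕ) (p : Fin K → ℝ) : ℝ := ⨅ i : Fin K, (K : ℝ) / (i.1 + 1) * sortAsc p i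

/-- Harmonic number `ℓ_K = ∑_{k=1}^K 1/k`. -/
def harm (K : ℕ) : ℝ := ∑ k ∈ Finset.Icc 1 K, (1 : ℝ) / k

/-- An increasing (upper) subset of `ℝ^K`. -/
def IncreasingSet {K : ℕ} (A : Set (Fin K → ℝ)) : Prop := ∀ x ∈ A, ∀ y, x ≤ y → y ∈ A

/-- Positive regression dependence on the subset `N` of nulls. -/
def PRDS {Ω : Type*} [MeasurableSpace Ω] (μ : Measure Ω) {K : ℕ}
    (P : Fin K → Ω → ℝ) (N : Finset (Fin K)) : Prop :=
  ∀ k ∈ N, ∀ A : Set (Fin K → ℝ), MeasurableSet A → IncreasingSet A →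
    Monotone (fun x : ℝ => μ[|{ω | P k ω ≤ x}] {ω | (fun j => P j ω) ∈ A})

/-- False discovery proportion of a rejection set `D` w.r.t. the null set `N`. -/
def fdp {K : ℕ} (D N : Finset (Fin K)) : ℝ := ((D ∩ N).card : ℝ) / (max D.card 1 : ℕ)

end

noncomputable section AuxProof

lemma card_filter_perm {K : ℕ} (σ : Equiv.Perm (Fin K)) (q : Fin K → Prop) :
    (univ.filter (fun j => q (σ j))).card = (univ.filter q).card := by
  apply Finset.card_bij (fun j _ => σ j)
  · intro a ha; simp_all
  · intro a ha b hb hab; exact σ.injective hab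
  · intro b hb; exact ⟨σ.symm b, by simp_all, by simp⟩

lemma monotone_sortAsc {K : ℕ} (p : Fin K → ℝ) : Monotone (sortAsc p) :=
  Tuple.monotone_sort p

lemma sortAsc_le_iff {K : ℕ} (p : Fin K → ℝ) (i : Fin K) (c : ℝ) :
    sortAsc p i ≤ c ↔ i.1 + 1 ≤ (univ.filter (fun j => p j ≤ c)).card := by
  have hcard : (univ.filter (fun j => sortAsc p j ≤ c)).card
      = (univ.filter (fun j => p j ≤ c)).card := by
    have := card_filter_perm (Tuple.sort p) (fun j => p j ≤ c)
    simp only [sortAsc, Function.comp_apply]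
    convert this using 2
    exact Finset.filter_congr_decidable _ _ _
  rw [← hcard]
  constructor
  · intro h
    calc i.1 + 1 = (Finset.Iic i).card := by simp
    _ ≤ _ := by
        apply Finset.card_le_card
        intro j hj
        simp only [Finset.mem_Iic] at hj
        simp only [Finset.mem_filter, Finset.mem_univ, true_and]
        exact le_trans (monotone_sortAsc p hj) h
  · intro h
    by_contra hc
    push_neg at hc
    have hsub : (univ.filter (fun j => sortAsc p j ≤ c)) ⊆ Finset.Iio i := by
      intro j hj
      simp only [Finset.mem_filter, Finset.mem_univ, true_and] at hj
      simp only [Finset.mem_Iio]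
      by_contra hji
      push_neg at hji
      exact absurd (le_trans (monotone_sortAsc p hji) hj) (not_le.mpr hc)
    have := Finset.card_le_card hsub
    simp at this
    omega

section BH
variable {K : ℕ} {α : ℝ}

lemma mem_bhFilter_iff (hK : 0 < K) (hα : 0 < α) (p : Fin K → ℝ) (i : Fin K) :
    ((K : ℝ) * sortAsc p i / (i.1 + 1) ≤ α) ↔ sortAsc p i ≤ α * (i.1 + 1) / K := by
  rw [div_le_iff₀ (by positivity), le_div_iff₀ (by exact_mod_cast hK)]
  constructor <;> intro h <;> nlinarith [h]

lemma bhCount_le (p : Fin K → ℝ) : bhCount K α p ≤ K := by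
  apply Finset.sup_le
  intro i _
  exact i.isLt

lemma sortAsc_bhCount (hK : 0 < K) (hα : 0 < α) (p : Fin K → ℝ) (h1 : 1 ≤ bhCount K α p) :
    sortAsc p ⟨bhCount K α p - 1, by have := bhCount_le (α := α) p; omega⟩
      ≤ α * (bhCount K α p) / K := by
  have hne : (univ.filter (fun i : Fin K => (K : ℝ) * sortAsc p i / (i.1 + 1) ≤ α)).Nonempty := by
    by_contra h
    rw [Finset.not_nonempty_iff_eq_empty] at h
    unfold bhCount at h1
    rw [h] at h1
    simp at h1
  obtain ⟨i, hi, hsup⟩ := Finset.exists_mem_eq_sup _ hne (fun i : Fin K => i.1 + 1)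
  simp only [Finset.mem_filter, Finset.mem_univ, true_and] at hi
  rw [mem_bhFilter_iff hK hα] at hi
  have hieq : i.1 + 1 = bhCount K α p := by rw [← hsup]; rfl
  have heq : (⟨bhCount K α p - 1, by have := bhCount_le (α := α) p; omega⟩ : Fin K) = i := by
    apply Fin.ext; simp; omega
  rw [heq]
  have : (i.1 : ℝ) + 1 = (bhCount K α p : ℝ) := by exact_mod_cast hieq
  rw [← this]
  exact hi

lemma le_bhCount (hK : 0 < K) (hα : 0 < α) (p : Fin K → ℝ) (i : Fin K)
    (h : sortAsc p i ≤ α * (i.1 + 1) / K) : i.1 + 1 ≤ bhCount K α p := by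
  apply Finset.le_sup (f := fun i : Fin K => i.1 + 1)
  simp only [Finset.mem_filter, Finset.mem_univ, true_and]
  exact (mem_bhFilter_iff hK hα p i).mpr h

lemma card_le_bhCount (hK : 0 < K) (hα : 0 < α) (p : Fin K → ℝ) :
    (univ.filter (fun j => p j ≤ α * (bhCount K α p) / K)).card ≤ bhCount K α p := by
  set m := (univ.filter (fun j => p j ≤ α * (bhCount K α p) / K)).card with hm
  by_contra h
  push_neg at h
  have hmK : m ≤ K := le_trans (Finset.card_le_card (Finset.filter_subset _ _)) (by simp)
  have hms : 1 ≤ m := by omega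
  have hfin : (⟨m - 1, by omega⟩ : Fin K).1 + 1 = m := by simp; omega
  have hs : sortAsc p ⟨m - 1, by omega⟩ ≤ α * (bhCount K α p) / K := by
    rw [sortAsc_le_iff]
    omega
  have hle : sortAsc p ⟨m-1, by omega⟩ ≤ α * ((⟨m-1, by omega⟩ : Fin K).1 + 1) / K := by
    refine le_trans hs ?_
    have hcast : (bhCount K α p : ℝ) ≤ ((⟨m-1, by omega⟩ : Fin K).1 + 1 : ℝ) := by
      have hc2 : ((⟨m-1, by omega⟩ : Fin K).1 + 1 : ℝ) = (m:ℝ) := by exact_mod_cast hfin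
      rw [hc2]
      exact_mod_cast (by omega : bhCount K α p ≤ m)
    gcongr
  have := le_bhCount hK hα p _ hle
  rw [hfin] at this
  omega

lemma card_bhCount (hK : 0 < K) (hα : 0 < α) (p : Fin K → ℝ) :
    (univ.filter (fun j => p j ≤ α * (bhCount K α p) / K)).card = bhCount K α p := by
  refine le_antisymm (card_le_bhCount hK hα p) ?_
  rcases Nat.eq_zero_or_pos (bhCount K α p) with h0 | h1
  · omega
  · have := sortAsc_bhCount hK hα p h1
    rw [sortAsc_le_iff] at this
    simp at this
    omega

end BH

section BH2
variable {K : ℕ} {α : ℝ}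

lemma bhRejects_eq (hK : 0 < K) (hα : 0 < α) (p : Fin K → ℝ) :
    bhRejects K α p = univ.filter (fun k => p k ≤ α * (bhCount K α p) / K) := by
  ext k
  simp only [bhRejects, Finset.mem_filter, Finset.mem_univ, true_and]
  constructor
  · rintro ⟨i, hi, hpk⟩
    have h1 : 1 ≤ bhCount K α p := by omega
    have hble := bhCount_le (α := α) p
    have hmono : sortAsc p i ≤ sortAsc p ⟨bhCount K α p - 1, by omega⟩ :=
      monotone_sortAsc p (by simp [Fin.le_def]; omega)
    exact le_trans hpk (le_trans hmono (sortAsc_bhCount hK hα p h1))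
  · intro hpk
    have h1 : 1 ≤ bhCount K α p := by
      by_contra h0
      push_neg at h0
      interval_cases h : bhCount K α p
      · -- bhCount = 0, so p k ≤ 0, contradiction
        simp at hpk
        have hcard : 1 ≤ (univ.filter (fun j => p j ≤ (0:ℝ))).card := by
          exact Finset.card_pos.mpr ⟨k, by simp [hpk]⟩
        have hs : sortAsc p ⟨0, hK⟩ ≤ 0 := by rw [sortAsc_le_iff]; simpa using hcard
        have := le_bhCount hK hα p ⟨0, hK⟩ (le_trans hs (by positivity))
        omega
    have hble := bhCount_le (α := α) p
    refine ⟨⟨bhCount K α p - 1, by omega⟩, by simp; omega, ?_⟩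
    by_contra hlt
    push_neg at hlt
    -- p k > sortAsc p (k*-1); derive card contradiction
    set c := sortAsc p ⟨bhCount K α p - 1, by omega⟩ with hc
    have hcard1 : bhCount K α p ≤ (univ.filter (fun j => p j ≤ c)).card := by
      have : sortAsc p ⟨bhCount K α p - 1, by omega⟩ ≤ c := le_refl _
      rw [sortAsc_le_iff] at this
      simp at this
      omega
    have hsub : (univ.filter (fun j => p j ≤ c)) ⊂ (univ.filter (fun j => p j ≤ α * (bhCount K α p) / K)) := by
      constructor
      · intro j hj
        simp only [Finset.mem_filter, Finset.mem_univ, true_and] at *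
        exact le_trans hj (sortAsc_bhCount hK hα p h1)
      · intro hcon
        have hk : k ∈ univ.filter (fun j => p j ≤ α * (bhCount K α p) / K) := by simp [hpk]
        have := hcon hk
        simp only [Finset.mem_filter, Finset.mem_univ, true_and] at this
        exact absurd this (not_le.mpr hlt)
    have := Finset.card_lt_card hsub
    rw [card_bhCount hK hα p] at this
    omega

lemma card_bhRejects (hK : 0 < K) (hα : 0 < α) (p : Fin K → ℝ) :
    (bhRejects K α p).card = bhCount K α p := by
  rw [bhRejects_eq hK hα p, card_bhCount hK hα p]

lemma bhCount_antitone (hK : 0 < K) (hα : 0 < α) : Antitone (bhCount K α) := by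
  intro p q hpq
  apply Finset.sup_le
  intro i hi
  simp only [Finset.mem_filter, Finset.mem_univ, true_and] at hi
  rw [mem_bhFilter_iff hK hα] at hi
  have hs : sortAsc p i ≤ sortAsc q i := by
    rw [sortAsc_le_iff]
    have h2 : sortAsc q i ≤ sortAsc q i := le_refl _
    rw [sortAsc_le_iff] at h2
    refine le_trans h2 (Finset.card_le_card ?_)
    intro j hj
    simp only [Finset.mem_filter, Finset.mem_univ, true_and] at *
    exact le_trans (hpq j) hj
  exact le_bhCount hK hα p i (le_trans hs hi)

end BH2

section Meas
variable {K : ℕ} {α : ℝ}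

lemma measurableSet_sortAsc_le (i : Fin K) (c : ℝ) :
    MeasurableSet {x : Fin K → ℝ | sortAsc x i ≤ c} := by
  have heq : {x : Fin K → ℝ | sortAsc x i ≤ c}
      = ⋃ (s : Finset (Fin K)) (_ : s.card = i.1 + 1), {x : Fin K → ℝ | ∀ j ∈ s, x j ≤ c} := by
    ext x
    simp only [Set.mem_setOf_eq, Set.mem_iUnion, sortAsc_le_iff]
    constructor
    · intro h
      obtain ⟨t, hts, htc⟩ := Finset.exists_subset_card_eq h
      exact ⟨t, htc, fun j hj => (Finset.mem_filter.mp (hts hj)).2⟩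
    · rintro ⟨s, hsc, hsub⟩
      calc i.1 + 1 = s.card := hsc.symm
      _ ≤ _ := Finset.card_le_card
          (fun j hj => Finset.mem_filter.mpr ⟨Finset.mem_univ _, hsub j hj⟩)
  rw [heq]
  refine MeasurableSet.iUnion fun s => MeasurableSet.iUnion fun _ => ?_
  have : {x : Fin K → ℝ | ∀ j ∈ s, x j ≤ c} = ⋂ j ∈ s, {x : Fin K → ℝ | x j ≤ c} := by
    ext x; simp
  rw [this]
  exact MeasurableSet.biInter s.countable_toSet
    (fun j _ => measurableSet_le (measurable_pi_apply j) measurable_const)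

lemma measurableSet_bhCount_le (hK : 0 < K) (hα : 0 < α) (n : ℕ) :
    MeasurableSet {x : Fin K → ℝ | bhCount K α x ≤ n} := by
  have heq : {x : Fin K → ℝ | bhCount K α x ≤ n}
      = ⋂ i : Fin K, {x : Fin K → ℝ | (K:ℝ) * sortAsc x i / (i.1 + 1) ≤ α → i.1 + 1 ≤ n} := by
    ext x
    simp [bhCount, Finset.sup_le_iff]
  rw [heq]
  refine MeasurableSet.iInter fun i => ?_
  by_cases hn : i.1 + 1 ≤ n
  · have : {x : Fin K → ℝ | (K:ℝ) * sortAsc x i / (i.1 + 1) ≤ α → i.1 + 1 ≤ n} = Set.univ := by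
      ext x; simp [hn]
    rw [this]; exact MeasurableSet.univ
  · have h2 : {x : Fin K → ℝ | (K:ℝ) * sortAsc x i / (i.1 + 1) ≤ α → i.1 + 1 ≤ n}
        = {x : Fin K → ℝ | sortAsc x i ≤ α * (i.1 + 1) / K}ᶜ := by
      ext x
      simp only [Set.mem_setOf_eq, Set.mem_compl_iff, ← mem_bhFilter_iff hK hα]
      tauto
    rw [h2]
    exact (measurableSet_sortAsc_le i _).compl

end Meas

section FDP
variable {K : ℕ} {α : ℝ}

lemma increasingSet_bhCount_le (hK : 0 < K) (hα : 0 < α) (n : ℕ) :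
    IncreasingSet {x : Fin K → ℝ | bhCount K α x ≤ n} :=
  fun x hx y hxy => le_trans (bhCount_antitone hK hα hxy) hx

lemma fdp_eq (hK : 0 < K) (hα : 0 < α) (p : Fin K → ℝ) (N : Finset (Fin K)) :
    fdp (bhRejects K α p) N =
      ∑ k ∈ N, ∑ r ∈ Finset.range K,
        (if p k ≤ α * (r + 1) / K ∧ bhCount K α p = r + 1 then (1:ℝ)/(r+1) else 0) := by
  unfold fdp
  rcases Nat.eq_zero_or_pos (bhCount K α p) with h0 | h1
  · have hD : bhRejects K α p = ∅ := by
      apply Finset.card_eq_zero.mp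
      rw [card_bhRejects hK hα p, h0]
    rw [hD]
    simp only [Finset.empty_inter, Finset.card_empty, Nat.cast_zero, zero_div]
    rw [eq_comm]
    apply Finset.sum_eq_zero
    intro k _
    apply Finset.sum_eq_zero
    intro r _
    rw [if_neg]
    rintro ⟨-, hcon⟩
    omega
  · have hRK := bhCount_le (α := α) p
    have hin : ∀ k : Fin K, ∑ r ∈ Finset.range K,
        (if p k ≤ α * (r + 1) / K ∧ bhCount K α p = r + 1 then (1:ℝ)/(r+1) else 0)
        = (if p k ≤ α * (bhCount K α p) / K then (1:ℝ)/(bhCount K α p) else 0) := by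
      intro k
      rw [Finset.sum_eq_single (bhCount K α p - 1)]
      · have hnat : bhCount K α p - 1 + 1 = bhCount K α p := by omega
        have hcast : ((bhCount K α p - 1 : ℕ) : ℝ) + 1 = (bhCount K α p : ℝ) := by
          exact_mod_cast hnat
        rw [hnat, hcast]
        simp
      · intro r hr hne
        rw [if_neg]
        rintro ⟨-, hcon⟩
        omega
      · intro hcon
        exfalso; apply hcon
        simp only [Finset.mem_range]
        omega
    have hDN : bhRejects K α p ∩ N = N.filter (fun k => p k ≤ α * (bhCount K α p) / K) := by
      ext k
      rw [bhRejects_eq hK hα p]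
      simp only [Finset.mem_inter, Finset.mem_filter, Finset.mem_univ, true_and]
      tauto
    have hsum : (∑ k ∈ N, ∑ r ∈ Finset.range K,
        (if p k ≤ α * (r + 1) / K ∧ bhCount K α p = r + 1 then (1:ℝ)/(r+1) else 0))
        = ((N.filter (fun k => p k ≤ α * (bhCount K α p) / K)).card : ℝ)
            * ((1:ℝ)/(bhCount K α p)) := by
      rw [Finset.sum_congr rfl (fun k _ => hin k), ← Finset.sum_filter, Finset.sum_const,
        nsmul_eq_mul]
    rw [hsum, hDN, card_bhRejects hK hα p]
    have hmax : bhCount K α p ⊔ 1 = bhCount K α p := max_eq_left h1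
    rw [hmax]
    ring

end FDP

section Prob
open MeasureTheory ProbabilityTheory
open scoped ENNReal

variable {Ω : Type*} [MeasurableSpace Ω] {μ : Measure Ω}

lemma cond_le_one' [IsFiniteMeasure μ] {s t : Set Ω} (hs : MeasurableSet s) :
    μ[|s] t ≤ 1 := by
  rw [cond_apply hs]
  rcases eq_or_ne (μ s) 0 with h0 | h0
  · have h1 : μ (s ∩ t) = 0 := measure_mono_null Set.inter_subset_left h0
    simp [h1]
  · have h1 : μ (s ∩ t) ≤ μ s := measure_mono Set.inter_subset_left
    have h2 : (μ s)⁻¹ * μ (s ∩ t) ≤ (μ s)⁻¹ * μ s := mul_le_mul_right h1 _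
    rw [ENNReal.inv_mul_cancel h0 (measure_ne_top μ s)] at h2
    exact h2

lemma mul_cond' [IsFiniteMeasure μ] {s t : Set Ω} (hs : MeasurableSet s) :
    μ s * μ[|s] t = μ (s ∩ t) := by
  rw [cond_apply hs]
  rcases eq_or_ne (μ s) 0 with h0 | h0
  · have h1 : μ (s ∩ t) = 0 := measure_mono_null Set.inter_subset_left h0
    simp [h0, h1]
  · rw [← mul_assoc, ENNReal.mul_inv_cancel h0 (measure_ne_top μ s), one_mul]

lemma key_bound (μ : Measure Ω) [IsProbabilityMeasure μ]
    {K : ℕ} (hK : 0 < K) {α : ℝ} (hα : α ∈ Set.Ioo (0 : ℝ) 1)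
    (P : Fin K → Ω → ℝ) (hP : ∀ k, Measurable (P k)) (N : Finset (Fin K))
    (h_pvar : ∀ k ∈ N, ∀ x ∈ Set.Ioo (0 : ℝ) 1, μ {ω | P k ω ≤ x} ≤ ENNReal.ofReal x)
    (h_prds : PRDS μ P N) {k : Fin K} (hk : k ∈ N) :
    ∑ r ∈ Finset.range K, ENNReal.ofReal (1/(r+1:ℝ)) *
      μ ({ω | P k ω ≤ α * (r+1) / K} ∩ {ω | bhCount K α (fun j => P j ω) = r+1})
      ≤ ENNReal.ofReal (α / K) := by
  obtain ⟨hα0, hα1⟩ := hα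
  set C : ℕ → Set Ω := fun n => {ω | bhCount K α (fun j => P j ω) ≤ n} with hC
  set s : ℕ → Set Ω := fun n => {ω | P k ω ≤ α * n / K} with hs
  set h : ℕ → ℝ≥0∞ := fun n => μ[|s n] (C n) with hh
  have hPvec : Measurable (fun ω => (fun j => P j ω)) := measurable_pi_lambda _ hP
  have hCmeas : ∀ n, MeasurableSet (C n) := fun n =>
    (measurableSet_bhCount_le hK hα0 n).preimage hPvec
  have hsmeas : ∀ n, MeasurableSet (s n) := fun n =>
    measurableSet_le (hP k) measurable_const
  have hCmono : ∀ {n m : ℕ}, n ≤ m → C n ⊆ C m := by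
    intro n m hnm ω hω
    exact le_trans hω hnm
  have hprds : ∀ n, Monotone (fun x : ℝ => μ[|{ω | P k ω ≤ x}] (C n)) := fun n =>
    h_prds k hk {x | bhCount K α x ≤ n} (measurableSet_bhCount_le hK hα0 n)
      (increasingSet_bhCount_le hK hα0 n)
  have hts : ∀ n m : ℕ, n ≤ m → α * n / K ≤ α * m / K := by
    intro n m hnm
    have hc : (n:ℝ) ≤ m := Nat.cast_le.mpr hnm
    gcongr
  have hmono : Monotone h := by
    apply monotone_nat_of_le_succ
    intro n
    calc h n ≤ μ[|s (n+1)] (C n) := hprds n (hts n (n+1) (by omega))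
    _ ≤ h (n+1) := by
        rw [hh]
        exact measure_mono (hCmono (by omega))
  -- per-term bound
  have hterm : ∀ r ∈ Finset.range K, ENNReal.ofReal (1/(r+1:ℝ)) *
      μ ({ω | P k ω ≤ α * (r+1) / K} ∩ {ω | bhCount K α (fun j => P j ω) = r+1})
      ≤ ENNReal.ofReal (α / K) * (h (r+1) - h r) := by
    intro r hr
    rw [Finset.mem_range] at hr
    have hEeq : {ω | P k ω ≤ α * (r+1) / K} ∩ {ω | bhCount K α (fun j => P j ω) = r+1}
        = s (r+1) ∩ (C (r+1) \ C r) := by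
      rw [hs, hC]
      ext ω
      simp only [Set.mem_inter_iff, Set.mem_setOf_eq, Set.mem_diff, Nat.cast_add,
        Nat.cast_one]
      constructor
      · rintro ⟨h1, h2⟩
        exact ⟨h1, by omega, by omega⟩
      · rintro ⟨h1, h2, h3⟩
        exact ⟨h1, by omega⟩
    rw [hEeq]
    -- splitting
    have hsplit : μ ((s (r+1) ∩ C (r+1)) ∩ C r) + μ ((s (r+1) ∩ C (r+1)) \ C r)
        = μ (s (r+1) ∩ C (r+1)) := measure_inter_add_diff _ (hCmeas r)
    have he1 : (s (r+1) ∩ C (r+1)) ∩ C r = s (r+1) ∩ C r := by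
      rw [Set.inter_assoc]
      congr 1
      exact Set.inter_eq_right.mpr (hCmono (by omega))
    have he2 : (s (r+1) ∩ C (r+1)) \ C r = s (r+1) ∩ (C (r+1) \ C r) := by
      rw [Set.inter_diff_assoc]
    rw [he1, he2] at hsplit
    -- lower bound on μ (s (r+1) ∩ C r)
    have hlow : μ (s (r+1)) * h r ≤ μ (s (r+1) ∩ C r) := by
      rw [← mul_cond' (hsmeas (r+1))]
      gcongr
      exact hprds r (hts r (r+1) (by omega))
    have hup : μ (s (r+1) ∩ C (r+1)) = μ (s (r+1)) * h (r+1) :=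
      (mul_cond' (hsmeas (r+1))).symm
    have hkey : μ (s (r+1) ∩ (C (r+1) \ C r)) + μ (s (r+1)) * h r
        ≤ μ (s (r+1)) * h (r+1) := by
      rw [← hup, ← hsplit]
      rw [add_comm]
      gcongr
    -- finiteness
    have hfin : μ (s (r+1)) * h r ≠ ∞ := by
      apply ENNReal.mul_ne_top (measure_ne_top μ _)
      exact ne_top_of_le_ne_top (by simp) (cond_le_one' (hsmeas r))
    have hdist : μ (s (r+1)) * (h (r+1) - h r) + μ (s (r+1)) * h r
        = μ (s (r+1)) * h (r+1) := by
      rw [← mul_add, tsub_add_cancel_of_le (hmono (by omega : r ≤ r+1))]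
    have hstep : μ (s (r+1) ∩ (C (r+1) \ C r)) ≤ μ (s (r+1)) * (h (r+1) - h r) := by
      rw [← ENNReal.add_le_add_iff_right hfin, hdist]
      exact hkey
    -- now multiply
    calc ENNReal.ofReal (1/(r+1:ℝ)) * μ (s (r+1) ∩ (C (r+1) \ C r))
        ≤ ENNReal.ofReal (1/(r+1:ℝ)) * (μ (s (r+1)) * (h (r+1) - h r)) := by gcongr
    _ ≤ ENNReal.ofReal (1/(r+1:ℝ)) * (ENNReal.ofReal (α * (r+1) / K) * (h (r+1) - h r)) := by
        gcongr
        have hmem : α * ((r:ℝ)+1) / K ∈ Set.Ioo (0:ℝ) 1 := by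
          constructor
          · positivity
          · have h1 : α * ((r+1:ℕ):ℝ) / K ≤ α * (K:ℝ) / K := hts (r+1) K (by omega)
            have h2 : α * (K:ℝ) / K = α := by
              field_simp
            push_cast at h1
            rw [h2] at h1
            exact lt_of_le_of_lt h1 hα1
        rw [hs]
        push_cast
        exact h_pvar k hk _ hmem
    _ = ENNReal.ofReal (α / K) * (h (r+1) - h r) := by
        rw [← mul_assoc]
        congr 1
        rw [← ENNReal.ofReal_mul (by positivity)]
        congr 1
        field_simp
  calc ∑ r ∈ Finset.range K, ENNReal.ofReal (1/(r+1:ℝ)) *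
      μ ({ω | P k ω ≤ α * (r+1) / K} ∩ {ω | bhCount K α (fun j => P j ω) = r+1})
      ≤ ∑ r ∈ Finset.range K, ENNReal.ofReal (α / K) * (h (r+1) - h r) :=
        Finset.sum_le_sum hterm
  _ = ENNReal.ofReal (α / K) * ∑ r ∈ Finset.range K, (h (r+1) - h r) := by
        rw [Finset.mul_sum]
  _ ≤ ENNReal.ofReal (α / K) * 1 := by
        gcongr
        have htel : ∀ n : ℕ, ∑ r ∈ Finset.range n, (h (r+1) - h r) ≤ h n := by
          intro n
          induction n with
          | zero => simp
          | succ m ih =>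
              rw [Finset.sum_range_succ]
              calc ∑ r ∈ Finset.range m, (h (r+1) - h r) + (h (m+1) - h m)
                  ≤ h m + (h (m+1) - h m) := by gcongr
              _ = h (m+1) := add_tsub_cancel_of_le (hmono (by omega : m ≤ m+1))
        exact le_trans (htel K) (cond_le_one' (hsmeas K))
  _ = ENNReal.ofReal (α / K) := mul_one _

end Prob


end AuxProof

/-- **Theorem 2 (BH under PRDS).** If the p-values satisfy PRDS on the null set, then
the BH procedure at level `α` has FDR at most `α K₀ / K`. -/
theorem bh_fdr_prds
    {Ω : Type*} [MeasurableSpace Ω] (μ : Measure Ω) [IsProbabilityMeasure μ]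
    {K : ℕ} (hK : 0 < K) {α : ℝ} (hα : α ∈ Set.Ioo (0 : ℝ) 1)
    (P : Fin K → Ω → ℝ) (hP : ∀ k, Measurable (P k)) (N : Finset (Fin K))
    (h_pvar : ∀ k ∈ N, ∀ x ∈ Set.Ioo (0 : ℝ) 1, μ {ω | P k ω ≤ x} ≤ ENNReal.ofReal x)
    (h_prds : PRDS μ P N) :
    ∫ ω, fdp (bhRejects K α (fun k => P k ω)) N ∂μ ≤ α * N.card / K := by
  obtain ⟨hα0, hα1⟩ := hα
  have hPvec : Measurable (fun ω => (fun j => P j ω)) := measurable_pi_lambda _ hP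
  set E : Fin K → ℕ → Set Ω := fun k r =>
    {ω | P k ω ≤ α * (r+1) / K} ∩ {ω | bhCount K α (fun j => P j ω) = r+1} with hE
  have hEmeas : ∀ k r, MeasurableSet (E k r) := by
    intro k r
    apply MeasurableSet.inter
    · exact measurableSet_le (hP k) measurable_const
    · have hd : {ω | bhCount K α (fun j => P j ω) = r+1}
          = ((fun ω => (fun j => P j ω)) ⁻¹' {x | bhCount K α x ≤ r+1})
            \ ((fun ω => (fun j => P j ω)) ⁻¹' {x | bhCount K α x ≤ r}) := by
        ext ω
        simp only [Set.mem_diff, Set.mem_preimage, Set.mem_setOf_eq]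
        omega
      rw [hd]
      exact ((measurableSet_bhCount_le hK hα0 (r+1)).preimage hPvec).diff
        ((measurableSet_bhCount_le hK hα0 r).preimage hPvec)
  have hfun : (fun ω => fdp (bhRejects K α (fun k => P k ω)) N)
      = fun ω => ∑ k ∈ N, ∑ r ∈ Finset.range K,
          Set.indicator (E k r) (fun _ => (1:ℝ)/(r+1)) ω := by
    funext ω
    rw [fdp_eq hK hα0 (fun j => P j ω) N]
    refine Finset.sum_congr rfl (fun k _ => Finset.sum_congr rfl (fun r _ => ?_))
    by_cases hc : P k ω ≤ α * (r+1)/K ∧ bhCount K α (fun j => P j ω) = r+1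
    · rw [if_pos hc]
      exact (Set.indicator_of_mem (⟨hc.1, hc.2⟩ : ω ∈ E k r) (fun _ => (1:ℝ)/(r+1))).symm
    · rw [if_neg hc]
      exact (Set.indicator_of_notMem (fun hmem : ω ∈ E k r => hc ⟨hmem.1, hmem.2⟩) (fun _ => (1:ℝ)/(r+1))).symm
  rw [hfun]
  rw [integral_finset_sum N (fun k _ => integrable_finset_sum _
    (fun r _ => (integrable_const _).indicator (hEmeas k r)))]
  have hint : ∀ k ∈ N, (∫ ω, ∑ r ∈ Finset.range K,
      Set.indicator (E k r) (fun _ => (1:ℝ)/(r+1)) ω ∂μ)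
      = ∑ r ∈ Finset.range K, (μ (E k r)).toReal * ((1:ℝ)/(r+1)) := by
    intro k _
    rw [integral_finset_sum _ (fun r _ => (integrable_const _).indicator (hEmeas k r))]
    refine Finset.sum_congr rfl (fun r _ => ?_)
    rw [integral_indicator_const _ (hEmeas k r), smul_eq_mul]
    rfl
  rw [Finset.sum_congr rfl hint]
  have hkb : ∀ k ∈ N, ∑ r ∈ Finset.range K, (μ (E k r)).toReal * ((1:ℝ)/(r+1)) ≤ α / K := by
    intro k hk
    have hEN := key_bound μ hK ⟨hα0, hα1⟩ P hP N h_pvar h_prds hk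
    have hle : ENNReal.ofReal (∑ r ∈ Finset.range K, (μ (E k r)).toReal * ((1:ℝ)/(r+1)))
        ≤ ENNReal.ofReal (α / K) := by
      rw [ENNReal.ofReal_sum_of_nonneg (fun r _ => by positivity)]
      refine le_trans (Finset.sum_le_sum (fun r _ => ?_)) hEN
      rw [ENNReal.ofReal_mul ENNReal.toReal_nonneg,
        ENNReal.ofReal_toReal (measure_ne_top μ _), mul_comm]
    rw [ENNReal.ofReal_le_ofReal_iff (by positivity)] at hle
    exact hle
  calc ∑ k ∈ N, ∑ r ∈ Finset.range K, (μ (E k r)).toReal * ((1:ℝ)/(r+1))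
      ≤ ∑ _k ∈ N, α / K := Finset.sum_le_sum hkb
  _ = α * N.card / K := by
      rw [Finset.sum_const, nsmul_eq_mul]
      ring
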